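/- arXiv:1702.00240 — 2 statements merged into one kernel-verified Lean document; each statement's English description precedes it below -/
import Mathlib

section
/- Let C be a category, A a small full subcategory, and E_A : C → Set^(A^op) the restricted Yoneda embedding. If E_A is full and conservative, then every object X of C is a minimal weak colimit of its canonical diagram with respect to A: the canonical cocone (a → X) over the forgetful functor A/X → C is a weak colimit cocone, and every endomorphism f : X → X commuting with all cocone morphisms is an isomorphism. -/
open CategoryTheory CategoryTheory.Limits

universe v u

namespace CategoryTheory.Presheaf

/-- The restricted Yoneda functor, as defined in the older Mathlib (no `ULift`). -/
def restrictedYoneda {C' : Type*} [Category C'] {ℰ : Type*} [Category ℰ] (F : C' ⥤ ℰ) :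
    ℰ ⥤ C'ᵒᵖ ⥤ Type _ :=
  yoneda ⋙ (Functor.whiskeringLeft _ _ _).obj F.op

end CategoryTheory.Presheaf

variable {A : Type v} [SmallCategory A] {C : Type u} [Category.{v} C]

/-- The canonical cocone on the canonical diagram of `X` with respect to the
subcategory `A` (given by `ι : A ⥤ C`). -/
@[simps]
def canonicalCocone (ι : A ⥤ C) (X : C) :
    Cocone (CostructuredArrow.proj ι X ⋙ ι) where
  pt := X
  ι := { app := fun f => f.hom
         naturality := fun _ _ g => (CostructuredArrow.w g).trans (Category.comp_id _).symm }

/-- If the restricted Yoneda embedding `E_A : C ⥤ Set^(Aᵒᵖ)` is full and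
conservative, then every object `X` of `C` is a minimal weak colimit of its canonical
diagram with respect to `A`: the canonical cocone is a weak colimit cocone, and every
endomorphism of `X` commuting with all cocone morphisms is an isomorphism. -/
theorem minimal_weak_colimit_of_full_conservative
    (ι : A ⥤ C) [ι.Full] [ι.Faithful]
    (hFull : (Presheaf.restrictedYoneda ι).Full)
    (hCons : ∀ ⦃X Y : C⦄ (f : X ⟶ Y),
      IsIso ((Presheaf.restrictedYoneda ι).map f) → IsIso f)
    (X : C) :
    (∀ s : Cocone (CostructuredArrow.proj ι X ⋙ ι),
        ∃ m : X ⟶ s.pt, ∀ j, (canonicalCocone ι X).ι.app j ≫ m = s.ι.app j) ∧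
      (∀ f : X ⟶ X,
        (∀ j, (canonicalCocone ι X).ι.app j ≫ f = (canonicalCocone ι X).ι.app j) →
          IsIso f) := by
  constructor
  · intro s
    let τ : (Presheaf.restrictedYoneda ι).obj X ⟶ (Presheaf.restrictedYoneda ι).obj s.pt :=
      { app := fun a => TypeCat.ofHom (fun g => s.ι.app (CostructuredArrow.mk g))
        naturality := by
          intro a a' h
          ext g
          have := s.ι.naturality
            (CostructuredArrow.homMk h.unop rfl :
              CostructuredArrow.mk (ι.map h.unop ≫ g) ⟶ CostructuredArrow.mk g)
          simp at this; exact this.symm }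
    obtain ⟨m, hm⟩ := hFull.map_surjective τ
    refine ⟨m, fun j => ?_⟩
    obtain ⟨a, ⟨⟨⟩⟩, g⟩ := j
    have := ConcreteCategory.congr_hom (congrFun (congrArg NatTrans.app hm) (Opposite.op a)) g
    exact this
  · intro f hf
    apply hCons
    have : (Presheaf.restrictedYoneda ι).map f = 𝟙 _ := by
      ext a g
      exact hf (CostructuredArrow.mk g)
    rw [this]
    infer_instance
end

section
/- Let H₁, H₂ : C → D be functors into a pointed category D, let A be a small full subcategory of C, and define for each morphism f : E S → E H₁ A (in a suitable presheaf-type setting) the trace set T_{H}(f) of morphisms t : A → B in A killing f after applying H. If the collections J(H₁) and J(H₂) of all such trace sets coincide and both H₁, H₂ preserve λ-filtered colimits and zero objects, then ker H₁ = ker H₂, where ker H is the class of objects sent to zero. Consequently, since there is only a set of possible collections J(H), there is only a set of distinct kernels of λ-filtered-colimit-preserving, zero-preserving endofunctors. -/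
open CategoryTheory CategoryTheory.Limits

universe v u u₂ u₃

/-- A small category `J` is `κ`-filtered if every functor to `J` from a category with
fewer than `κ` morphisms admits a cocone. -/
def IsCardinalFilteredCat (J : Type v) [SmallCategory J] (κ : Cardinal.{v}) : Prop :=
  ∀ (K : Type v) (_ : SmallCategory K) (F : K ⥤ J),
    Cardinal.mk (Σ (k k' : K), k ⟶ k') < κ → Nonempty (Cocone F)

/-- An object `S` is `κ`-presentable if `Hom(S, -)` preserves `κ`-filtered colimits. -/
def IsCardinalPresentableObj {D : Type u₃} [Category.{v} D] (S : D) (κ : Cardinal.{v}) :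
    Prop :=
  ∀ (J : Type v) (_ : SmallCategory J), IsCardinalFilteredCat J κ →
    Nonempty (PreservesColimitsOfShape J (coyoneda.obj (Opposite.op S)))

section Ohkawa

variable {K : Type u} [Category.{v} K]
  {Kl : Type v} [SmallCategory Kl] (ι : Kl ⥤ K)
  {HoK : Type u₂} [Category.{v} HoK] [HasZeroMorphisms HoK]
  {L : Type u₃} [Category.{v} L] [HasZeroMorphisms L]
  (P : K ⥤ HoK) (E : HoK ⥤ L)

/-- The trace set `T_H(f)` of a morphism `f : E S ⟶ E P H A` (with `S`, `A` in the small
subcategory `Kl`): the set of morphisms `t : A → B` in `Kl` such that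
`E P H t ∘ f = 0`. -/
def traceSet (H : K ⥤ K) (s a : Kl)
    (f : E.obj (P.obj (ι.obj s)) ⟶ E.obj (P.obj (H.obj (ι.obj a)))) :
    Set (Σ b : Kl, a ⟶ b) :=
  { t | f ≫ E.map (P.map (H.map (ι.map t.2))) = 0 }

/-- The collection `J(H)` of all trace sets of `H`. -/
def Jcoll (H : K ⥤ K) : Set (Σ (_s _a : Kl), Set (Σ b : Kl, _a ⟶ b)) :=
  { x | ∃ f : E.obj (P.obj (ι.obj x.1)) ⟶ E.obj (P.obj (H.obj (ι.obj x.2.1))),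
      traceSet ι P E H x.1 x.2.1 f = x.2.2 }

/-- The kernel of an endofunctor `H`: the class of objects sent to zero
(after projecting to the homotopy category). -/
def kerSet (H : K ⥤ K) : Set K := { X | IsZero (P.obj (H.obj X)) }

/-- An endofunctor is good if it preserves `κ`-filtered colimits and zero objects. -/
def GoodEndofunctor (κ : Cardinal.{v}) (H : K ⥤ K) : Prop :=
  (∀ (J : Type v) (_ : SmallCategory J), IsCardinalFilteredCat J κ →
      Nonempty (PreservesColimitsOfShape J H)) ∧
    (∀ X : K, IsZero X → IsZero (H.obj X))

lemma isFiltered_of_cardinalFiltered (J : Type v) [SmallCategory J] (κ : Cardinal.{v})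
    (hκ : κ.IsRegular) (h : IsCardinalFilteredCat J κ) : IsFiltered J := by
  apply IsFiltered.of_cocone_nonempty.{v}
  intro K _ _ F
  apply h K _ F
  refine lt_of_lt_of_le ?_ hκ.aleph0_le
  rw [Cardinal.mk_lt_aleph0_iff]
  infer_instance

lemma ohkawa_ker_subset
    [E.PreservesZeroMorphisms]
    (κ : Cardinal.{v}) (hκ : κ.IsRegular)
    (hEff : ∀ (s : Kl) (Y : HoK),
      Function.Bijective (fun g : P.obj (ι.obj s) ⟶ Y => E.map g))
    (hWG : ∀ Y : HoK, (∀ (s : Kl) (g : P.obj (ι.obj s) ⟶ Y), g = 0) → IsZero Y)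
    (hpres : ∀ s : Kl, IsCardinalPresentableObj (E.obj (P.obj (ι.obj s))) κ)
    (hEP : ∀ (J : Type v) (_ : SmallCategory J), IsCardinalFilteredCat J κ →
      Nonempty (PreservesColimitsOfShape J (P ⋙ E)))
    (hcolim : ∀ X : K, ∃ (J : Type v) (_ : SmallCategory J),
      IsCardinalFilteredCat J κ ∧ ∃ (Dg : J ⥤ Kl) (c : Cocone (Dg ⋙ ι)),
        c.pt = X ∧ Nonempty (IsColimit c))
    (H₁ H₂ : K ⥤ K) (h₁ : GoodEndofunctor κ H₁) (h₂ : GoodEndofunctor κ H₂)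
    (hJ : Jcoll ι P E H₂ ⊆ Jcoll ι P E H₁) :
    kerSet P H₁ ⊆ kerSet P H₂ := by
  intro X hX
  obtain ⟨J, instJ, hfil, Dg, c, hpt, ⟨hc⟩⟩ := hcolim X
  subst hpt
  have instF : IsFiltered J := isFiltered_of_cardinalFiltered J κ hκ hfil
  obtain ⟨i1⟩ := h₁.1 J instJ hfil
  obtain ⟨i2⟩ := h₂.1 J instJ hfil
  obtain ⟨iEP⟩ := hEP J instJ hfil
  simp only [kerSet, Set.mem_setOf_eq] at hX ⊢
  apply hWG
  intro s g
  have hz1 : IsZero (E.obj (P.obj (H₁.obj c.pt))) := by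
    rw [IsZero.iff_id_eq_zero] at hX ⊢
    rw [← E.map_id, hX, E.map_zero]
  set S := E.obj (P.obj (ι.obj s)) with hS
  obtain ⟨ips⟩ := hpres s J instJ hfil
  -- the colimit of hom-sets for `H₂`
  let c₂ := (P ⋙ E).mapCocone (H₂.mapCocone c)
  have t₂ : IsColimit c₂ := isColimitOfPreserves (P ⋙ E) (isColimitOfPreserves H₂ hc)
  let cy₂ := (coyoneda.obj (Opposite.op S)).mapCocone c₂
  have ty₂ : IsColimit cy₂ := isColimitOfPreserves _ t₂
  obtain ⟨j, f, hf⟩ := Types.jointly_surjective _ ty₂ (E.map g)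
  -- transfer the trace set from `H₂` to `H₁`
  have hmem : (⟨s, Dg.obj j, traceSet ι P E H₂ s (Dg.obj j) f⟩ :
      Σ (_s _a : Kl), Set (Σ b : Kl, _a ⟶ b)) ∈ Jcoll ι P E H₂ := ⟨f, rfl⟩
  obtain ⟨f', hf'⟩ := hJ hmem
  dsimp only at f' hf'
  -- the colimit of hom-sets for `H₁`
  let c₁ := (P ⋙ E).mapCocone (H₁.mapCocone c)
  have t₁ : IsColimit c₁ := isColimitOfPreserves (P ⋙ E) (isColimitOfPreserves H₁ hc)
  let cy₁ := (coyoneda.obj (Opposite.op S)).mapCocone c₁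
  have ty₁ : IsColimit cy₁ := isColimitOfPreserves _ t₁
  have hzero : cy₁.ι.app j f' =
      cy₁.ι.app j (0 : S ⟶ E.obj (P.obj (H₁.obj (ι.obj (Dg.obj j))))) := by
    show f' ≫ E.map (P.map (H₁.map (c.ι.app j))) =
      (0 : S ⟶ _) ≫ E.map (P.map (H₁.map (c.ι.app j)))
    exact hz1.eq_of_tgt _ _
  obtain ⟨k, u, v, huv⟩ := (Types.FilteredColimit.isColimit_eq_iff _ ty₁).mp hzero
  have ht : f' ≫ E.map (P.map (H₁.map (ι.map (Dg.map u)))) = 0 := by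
    refine Eq.trans ?_ (zero_comp (f := E.map (P.map (H₁.map (ι.map (Dg.map v))))))
    exact huv
  have ht2 : f ≫ E.map (P.map (H₂.map (ι.map (Dg.map u)))) = 0 := by
    have hmem2 : (⟨Dg.obj k, Dg.map u⟩ : Σ b : Kl, Dg.obj j ⟶ b) ∈
        traceSet ι P E H₂ s (Dg.obj j) f := by
      rw [← hf']; exact ht
    exact hmem2
  have hEg : E.map g = 0 := by
    rw [← hf]
    have hw : ι.map (Dg.map u) ≫ c.ι.app k = c.ι.app j := c.w u
    calc cy₂.ι.app j f = f ≫ E.map (P.map (H₂.map (c.ι.app j))) := rfl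
      _ = f ≫ E.map (P.map (H₂.map (ι.map (Dg.map u) ≫ c.ι.app k))) := by rw [hw]
      _ = (f ≫ E.map (P.map (H₂.map (ι.map (Dg.map u))))) ≫
            E.map (P.map (H₂.map (c.ι.app k))) := by
          simp only [Functor.map_comp, Category.assoc]
      _ = 0 := by rw [ht2, zero_comp]
  exact (hEff s _).1 (show E.map g = E.map 0 by rw [hEg, E.map_zero])

/-- abstract Ohkawa theorem: in the presheaf-type setting where
`E` is full and faithful on morphisms with domain in the image of the small subcategory,
the image objects form a weak generator and are `κ`-presentable, `E P` preserves
`κ`-filtered colimits, and every object is a `κ`-filtered colimit of objects of the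
small subcategory, any two `κ`-filtered-colimit- and zero-preserving endofunctors
`H₁, H₂` with `J(H₁) = J(H₂)` have equal kernels; consequently there is only a set of
distinct kernels of such endofunctors. -/
theorem ohkawa_kernels_form_a_set
    [HasZeroObject K] [ι.Full] [ι.Faithful] [E.PreservesZeroMorphisms]
    (κ : Cardinal.{v}) (hκ : κ.IsRegular)
    (hEff : ∀ (s : Kl) (Y : HoK),
      Function.Bijective (fun g : P.obj (ι.obj s) ⟶ Y => E.map g))
    (hWG : ∀ Y : HoK, (∀ (s : Kl) (g : P.obj (ι.obj s) ⟶ Y), g = 0) → IsZero Y)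
    (hpres : ∀ s : Kl, IsCardinalPresentableObj (E.obj (P.obj (ι.obj s))) κ)
    (hEP : ∀ (J : Type v) (_ : SmallCategory J), IsCardinalFilteredCat J κ →
      Nonempty (PreservesColimitsOfShape J (P ⋙ E)))
    (hcolim : ∀ X : K, ∃ (J : Type v) (_ : SmallCategory J),
      IsCardinalFilteredCat J κ ∧ ∃ (Dg : J ⥤ Kl) (c : Cocone (Dg ⋙ ι)),
        c.pt = X ∧ Nonempty (IsColimit c)) :
    (∀ H₁ H₂ : K ⥤ K, GoodEndofunctor κ H₁ → GoodEndofunctor κ H₂ →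
        Jcoll ι P E H₁ = Jcoll ι P E H₂ → kerSet P H₁ = kerSet P H₂) ∧
      Small.{v} { S : Set K | ∃ H : K ⥤ K, GoodEndofunctor κ H ∧ S = kerSet P H } := by
  have main : ∀ H₁ H₂ : K ⥤ K, GoodEndofunctor κ H₁ → GoodEndofunctor κ H₂ →
      Jcoll ι P E H₁ = Jcoll ι P E H₂ → kerSet P H₁ = kerSet P H₂ := by
    intro H₁ H₂ h₁ h₂ hJ
    apply Set.Subset.antisymm
    · exact ohkawa_ker_subset ι P E κ hκ hEff hWG hpres hEP hcolim H₁ H₂ h₁ h₂ hJ.symm.le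
    · exact ohkawa_ker_subset ι P E κ hκ hEff hWG hpres hEP hcolim H₂ H₁ h₂ h₁ hJ.le
  refine ⟨main, ?_⟩
  apply small_of_injective
    (f := fun p : { S : Set K | ∃ H : K ⥤ K, GoodEndofunctor κ H ∧ S = kerSet P H } =>
      Jcoll ι P E p.2.choose)
  rintro ⟨S₁, hS₁⟩ ⟨S₂, hS₂⟩ h
  simp only [Subtype.mk.injEq]
  rw [hS₁.choose_spec.2, hS₂.choose_spec.2]
  exact main _ _ hS₁.choose_spec.1 hS₂.choose_spec.1 h

end Ohkawa
end
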